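/- arXiv:2605.06009 — 6 statements merged into one kernel-verified Lean document; each statement's English description precedes it below -/
import Mathlib

section
/- Let ν, λ > 0 and let φ : [0,π] → ℝ be a C² solution of −ν φ'' + φ³ − λ φ = 0 with φ(0) = φ(π) = 0. Suppose there exists x₀ ∈ (0,π) with φ'(x₀) = 0. Then |φ'(0)| ≤ λ/√(2ν). -/
theorem stmt4 (ν lam : ℝ) (hν : 0 < ν) (hlam : 0 < lam)
    (φ φ' φ'' : ℝ → ℝ)
    (hφ : ∀ x ∈ Set.Icc (0:ℝ) Real.pi, HasDerivAt φ (φ' x) x)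
    (hφ' : ∀ x ∈ Set.Icc (0:ℝ) Real.pi, HasDerivAt φ' (φ'' x) x)
    (hode : ∀ x ∈ Set.Icc (0:ℝ) Real.pi, -ν * φ'' x + (φ x) ^ 3 - lam * φ x = 0)
    (h0 : φ 0 = 0) (hpi : φ Real.pi = 0)
    (hx₀ : ∃ x₀ ∈ Set.Ioo (0:ℝ) Real.pi, φ' x₀ = 0) :
    |φ' 0| ≤ lam / Real.sqrt (2 * ν) := by
  obtain ⟨x₀, hx₀m, hx₀d⟩ := hx₀
  set E : ℝ → ℝ := fun x => -(ν/2)*(φ' x)^2 + (φ x)^4/4 - (lam/2)*(φ x)^2 with hEdef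
  have hc1 : ContinuousOn φ (Set.Icc 0 Real.pi) :=
    fun x hx => ((hφ x hx).continuousAt).continuousWithinAt
  have hc2 : ContinuousOn φ' (Set.Icc 0 Real.pi) :=
    fun x hx => ((hφ' x hx).continuousAt).continuousWithinAt
  have hcont : ContinuousOn E (Set.Icc 0 Real.pi) :=
    ((continuousOn_const.mul (hc2.pow 2)).add ((hc1.pow 4).div_const 4)).sub
      (continuousOn_const.mul (hc1.pow 2))
  have hderiv : ∀ x ∈ Set.Ico (0:ℝ) Real.pi, HasDerivWithinAt E 0 (Set.Ici x) x := by
    intro x hx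
    have hxm : x ∈ Set.Icc (0:ℝ) Real.pi := ⟨hx.1, hx.2.le⟩
    have h1 := hφ x hxm
    have h2 := hφ' x hxm
    have hD : HasDerivAt E (φ' x * (-ν * φ'' x + (φ x)^3 - lam * φ x)) x := by
      have := (((h2.pow 2).const_mul (-(ν/2))).add ((h1.pow 4).div_const 4)).sub
        ((h1.pow 2).const_mul (lam/2))
      refine this.congr_deriv ?_
      push_cast
      ring
    rw [hode x hxm, mul_zero] at hD
    exact hD.hasDerivWithinAt
  have hE0 : E x₀ = E 0 :=
    constant_of_has_deriv_right_zero hcont hderiv x₀ ⟨hx₀m.1.le, hx₀m.2.le⟩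
  have e0 : E 0 = -(ν/2)*(φ' 0)^2 := by simp [hEdef, h0]
  have e1 : E x₀ = (φ x₀)^4/4 - (lam/2)*(φ x₀)^2 := by simp [hEdef, hx₀d]
  rw [e0, e1] at hE0
  have key : (φ' 0)^2 * (2*ν) ≤ lam^2 := by
    nlinarith [sq_nonneg ((φ x₀)^2 - lam)]
  have hspos : 0 < Real.sqrt (2*ν) := Real.sqrt_pos.mpr (by positivity)
  have hs : Real.sqrt (2*ν) ^ 2 = 2*ν := Real.sq_sqrt (by positivity)
  rw [le_div_iff₀ hspos]
  nlinarith [sq_abs (φ' 0), abs_nonneg (φ' 0), hlam.le, hspos.le, key, hs]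
end

section
/- Let ν, λ > 0 with |θ| < λ/√(2ν), and let y solve −ν y'' + y³ − λ y = 0 with y(0) = 0, y'(0) = θ. Then wherever the solution is defined, (y')² = θ² + (1/(2ν)) y⁴ − (λ/ν) y², and y² ≤ λ − √(λ² − 2νθ²). In particular y and y' are bounded uniformly on the domain of existence. -/
theorem stmt5 (ν lam θ : ℝ) (hν : 0 < ν) (hlam : 0 < lam)
    (hθ : θ ^ 2 < lam ^ 2 / (2 * ν))
    (s : Set ℝ) (hs : Convex ℝ s) (h0s : (0:ℝ) ∈ s)
    (y y' y'' : ℝ → ℝ)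
    (hy : ∀ x ∈ s, HasDerivAt y (y' x) x)
    (hy' : ∀ x ∈ s, HasDerivAt y' (y'' x) x)
    (hode : ∀ x ∈ s, -ν * y'' x + (y x) ^ 3 - lam * y x = 0)
    (hy0 : y 0 = 0) (hy'0 : y' 0 = θ) :
    (∀ x ∈ s, (y' x) ^ 2 = θ ^ 2 + (1 / (2 * ν)) * (y x) ^ 4 - (lam / ν) * (y x) ^ 2) ∧
      (∀ x ∈ s, (y x) ^ 2 ≤ lam - Real.sqrt (lam ^ 2 - 2 * ν * θ ^ 2)) ∧
      ∃ M : ℝ, ∀ x ∈ s, |y x| ≤ M ∧ |y' x| ≤ M := by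
  set E : ℝ → ℝ := fun x => (y' x) ^ 2 + (lam / ν) * (y x) ^ 2 - (1 / (2 * ν)) * (y x) ^ 4
    with hE
  have hEderiv : ∀ x ∈ s, HasDerivAt E 0 x := by
    intro x hx
    have h1 : HasDerivAt (fun t => (y' t) ^ 2) (2 * (y' x) ^ 1 * y'' x) x :=
      (hy' x hx).pow 2
    have h2 : HasDerivAt (fun t => (lam / ν) * (y t) ^ 2)
        ((lam / ν) * (2 * (y x) ^ 1 * y' x)) x := ((hy x hx).pow 2).const_mul _
    have h3 : HasDerivAt (fun t => (1 / (2 * ν)) * (y t) ^ 4)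
        ((1 / (2 * ν)) * (4 * (y x) ^ 3 * y' x)) x := ((hy x hx).pow 4).const_mul _
    have h := (h1.add h2).sub h3
    refine h.congr_deriv ?_
    have hode' := hode x hx
    have : y'' x = ((y x) ^ 3 - lam * y x) / ν := by field_simp; linarith
    rw [this]
    field_simp
    ring
  have hEconst : ∀ x ∈ s, E x = θ ^ 2 := by
    intro x hx
    have key : ‖E x - E 0‖ ≤ 0 * ‖x - 0‖ := by
      apply hs.norm_image_sub_le_of_norm_hasDerivWithin_le
        (fun z hz => (hEderiv z hz).hasDerivWithinAt) (fun z _ => by simp) h0s hx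
    have hE0 : E 0 = θ ^ 2 := by simp [hE, hy0, hy'0]
    have hEq : E x - E 0 = 0 := by simpa [Real.norm_eq_abs] using key
    linarith [hEq, hE0]
  have part1 : ∀ x ∈ s, (y' x) ^ 2
      = θ ^ 2 + (1 / (2 * ν)) * (y x) ^ 4 - (lam / ν) * (y x) ^ 2 := by
    intro x hx
    have := hEconst x hx
    simp only [hE] at this
    linarith
  have hclean : ∀ z ∈ s, 2 * ν * (y' z) ^ 2
      = 2 * ν * θ ^ 2 + (y z) ^ 4 - 2 * lam * (y z) ^ 2 := by
    intro z hz
    have h := part1 z hz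
    field_simp at h
    nlinarith [h, hν]
  set r := Real.sqrt (lam ^ 2 - 2 * ν * θ ^ 2) with hr
  have hdisc : 0 < lam ^ 2 - 2 * ν * θ ^ 2 := by
    have h2ν : 0 < 2 * ν := by linarith
    rw [lt_div_iff₀ h2ν] at hθ
    nlinarith
  have hr2 : r ^ 2 = lam ^ 2 - 2 * ν * θ ^ 2 := Real.sq_sqrt hdisc.le
  have hrpos : 0 < r := Real.sqrt_pos.mpr hdisc
  have hrle : r ≤ lam := by nlinarith [hr2, hrpos]
  -- continuity of y^2 on s
  have hcont : ContinuousOn (fun x => (y x) ^ 2) s := fun x hx =>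
    (((hy x hx).continuousAt).pow 2).continuousWithinAt
  have part2 : ∀ x ∈ s, (y x) ^ 2 ≤ lam - r := by
    intro x hx
    by_contra hcon
    push_neg at hcon
    have hQ : ∀ z ∈ s, ((y z) ^ 2 - lam) ^ 2 ≥ r ^ 2 := by
      intro z hz
      have h1 := hclean z hz
      have h2 : 0 ≤ 2 * ν * (y' z) ^ 2 := by positivity
      rw [hr2]
      nlinarith [h1, h2]
    have hbig : (y x) ^ 2 ≥ lam + r := by
      have := hQ x hx
      nlinarith [hcon]
    -- IVT: y^2 takes value lam on uIcc 0 x ⊆ s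
    have hsub : Set.uIcc 0 x ⊆ s := (hs.ordConnected).uIcc_subset h0s hx
    have hmem : lam ∈ Set.uIcc ((y 0) ^ 2) ((y x) ^ 2) := by
      rw [hy0]
      rw [Set.mem_uIcc]
      left
      constructor
      · nlinarith
      · linarith
    have := intermediate_value_uIcc (hcont.mono hsub) hmem
    obtain ⟨c, hc, hyc⟩ := this
    have hcs : c ∈ s := hsub hc
    have hyc' : (y c) ^ 2 = lam := hyc
    have hQc := hQ c hcs
    rw [hyc'] at hQc
    nlinarith [hQc, hrpos]
  refine ⟨part1, part2, Real.sqrt (lam - r) + |θ|, fun x hx => ?_⟩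
  have h1 : |y x| ≤ Real.sqrt (lam - r) := by
    rw [← Real.sqrt_sq_eq_abs]
    exact Real.sqrt_le_sqrt (part2 x hx)
  have hynn : 0 ≤ (y x) ^ 2 := sq_nonneg _
  have h2 : (y' x) ^ 2 ≤ θ ^ 2 := by
    have hp := hclean x hx
    have ht : (y x) ^ 2 ≤ lam := le_trans (part2 x hx) (by linarith)
    nlinarith [hp, hynn, mul_nonneg hynn (sub_nonneg.mpr ht), hν]
  have h2' : |y' x| ≤ |θ| := by
    rw [← Real.sqrt_sq_eq_abs, ← Real.sqrt_sq_eq_abs θ]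
    exact Real.sqrt_le_sqrt h2
  constructor
  · have : (0:ℝ) ≤ |θ| := abs_nonneg θ
    linarith
  · have : (0:ℝ) ≤ Real.sqrt (lam - r) := Real.sqrt_nonneg _
    linarith
end

section
/- Let g : [0,∞) → ℝ be a nonnegative absolutely continuous function satisfying g'(t) + 2c₁ g(t)² ≤ c₂ for all t ≥ 0, where c₁, c₂ > 0. Set K₁ = (c₂/c₁)^{1/2}. If g(0) ≤ K₁ then g(t) ≤ K₁ for all t ≥ 0; moreover there exists a constant K, independent of g(0), such that g(t) ≤ K for all t ≥ 1/2. -/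
theorem stmt6 (c₁ c₂ : ℝ) (hc₁ : 0 < c₁) (hc₂ : 0 < c₂) :
    (∀ g g' : ℝ → ℝ,
        (∀ t, 0 ≤ t → 0 ≤ g t) →
        (∀ t, 0 ≤ t → HasDerivAt g (g' t) t) →
        (∀ t, 0 ≤ t → g' t + 2 * c₁ * (g t) ^ 2 ≤ c₂) →
        g 0 ≤ Real.sqrt (c₂ / c₁) → ∀ t, 0 ≤ t → g t ≤ Real.sqrt (c₂ / c₁)) ∧
    ∃ K : ℝ, ∀ g g' : ℝ → ℝ,
        (∀ t, 0 ≤ t → 0 ≤ g t) →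
        (∀ t, 0 ≤ t → HasDerivAt g (g' t) t) →
        (∀ t, 0 ≤ t → g' t + 2 * c₁ * (g t) ^ 2 ≤ c₂) →
        ∀ t, 1 / 2 ≤ t → g t ≤ K := by
  have hKnn : (0:ℝ) ≤ Real.sqrt (c₂ / c₁) := Real.sqrt_nonneg _
  have hK2 : Real.sqrt (c₂ / c₁) ^ 2 = c₂ / c₁ := Real.sq_sqrt (by positivity)
  have hKpos : 0 < Real.sqrt (c₂ / c₁) := Real.sqrt_pos.2 (by positivity)
  -- Key lemma: once below the barrier, stay below
  have key : ∀ (g g' : ℝ → ℝ),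
      (∀ t, 0 ≤ t → 0 ≤ g t) →
      (∀ t, 0 ≤ t → HasDerivAt g (g' t) t) →
      (∀ t, 0 ≤ t → g' t + 2 * c₁ * (g t) ^ 2 ≤ c₂) →
      ∀ s t₀, 0 ≤ s → s ≤ t₀ → g s ≤ Real.sqrt (c₂ / c₁) →
      g t₀ ≤ Real.sqrt (c₂ / c₁) := by
    intro g g' hpos hderiv hineq s t₀ hs hst hgs
    by_contra hcon
    push_neg at hcon
    set K := Real.sqrt (c₂ / c₁) with hKdef
    set S := Set.Icc s t₀ ∩ g ⁻¹' Set.Iic K with hSdef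
    have hcont : ContinuousOn g (Set.Icc s t₀) := fun u hu =>
      ((hderiv u (hs.trans hu.1)).continuousAt).continuousWithinAt
    have hSclosed : IsClosed S :=
      hcont.preimage_isClosed_of_isClosed isClosed_Icc isClosed_Iic
    have hScomp : IsCompact S :=
      IsCompact.of_isClosed_subset isCompact_Icc hSclosed Set.inter_subset_left
    have hSne : S.Nonempty := ⟨s, ⟨le_rfl, hst⟩, hgs⟩
    obtain ⟨hm1, hm2⟩ := hScomp.sSup_mem hSne
    set m := sSup S with hmdef
    have hm2' : g m ≤ K := hm2
    have hmt : m < t₀ := hm1.2.lt_of_ne (by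
      intro h; rw [h] at hm2'; exact absurd hm2' (not_le.2 hcon))
    have hgt : ∀ u ∈ Set.Ioo m t₀, K < g u := by
      intro u hu
      by_contra h
      push_neg at h
      have : u ∈ S := ⟨⟨hm1.1.trans hu.1.le, hu.2.le⟩, h⟩
      exact absurd (le_csSup hScomp.bddAbove this) (not_le.2 hu.1)
    have hcont' : ContinuousOn g (Set.Icc m t₀) :=
      hcont.mono (Set.Icc_subset_Icc hm1.1 le_rfl)
    have hanti : AntitoneOn g (Set.Icc m t₀) := by
      apply antitoneOn_of_deriv_nonpos (convex_Icc m t₀) hcont'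
      · intro u hu
        rw [interior_Icc] at hu
        exact (hderiv u (hs.trans (hm1.1.trans hu.1.le))).differentiableAt.differentiableWithinAt
      · intro u hu
        rw [interior_Icc] at hu
        have hu0 : 0 ≤ u := hs.trans (hm1.1.trans hu.1.le)
        rw [(hderiv u hu0).deriv]
        have h1 := hineq u hu0
        have h2 : K < g u := hgt u hu
        have h3 : c₂ / c₁ < g u ^ 2 := by
          calc c₂ / c₁ = K ^ 2 := hK2.symm
          _ < g u ^ 2 := by nlinarith [hKnn]
        have : c₂ < c₁ * g u ^ 2 := by
          rw [div_lt_iff₀ hc₁] at h3; linarith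
        nlinarith
    have := hanti (Set.left_mem_Icc.2 hmt.le) (Set.right_mem_Icc.2 hmt.le) hmt.le
    linarith [hm2']
  constructor
  · intro g g' hpos hderiv hineq h0 t ht
    exact key g g' hpos hderiv hineq 0 t le_rfl ht h0
  · refine ⟨Real.sqrt (c₂ / c₁) + 2 / c₁, ?_⟩
    intro g g' hpos hderiv hineq t₀ ht₀
    have ht₀0 : (0:ℝ) ≤ t₀ := le_trans (by norm_num) ht₀
    by_cases hcase : g t₀ ≤ Real.sqrt (c₂ / c₁)
    · have : (0:ℝ) < 2 / c₁ := by positivity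
      linarith
    · push_neg at hcase
      -- g > K₁ on all of [0, t₀]
      have hbig : ∀ u ∈ Set.Icc (0:ℝ) t₀, Real.sqrt (c₂ / c₁) < g u := by
        intro u hu
        by_contra h
        push_neg at h
        exact absurd (key g g' hpos hderiv hineq u t₀ hu.1 hu.2 h) (not_le.2 hcase)
      have hgpos : ∀ u ∈ Set.Icc (0:ℝ) t₀, 0 < g u := fun u hu =>
        hKpos.trans (hbig u hu)
      -- F u = (g u)⁻¹ - c₁ * u has F' ≥ 0, F monotone on [0,t₀]
      set F : ℝ → ℝ := fun u => (g u)⁻¹ - c₁ * u with hF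
      have hFd : ∀ u ∈ Set.Icc (0:ℝ) t₀,
          HasDerivAt F (-g' u / g u ^ 2 - c₁) u := by
        intro u hu
        have h1 : HasDerivAt (fun u => (g u)⁻¹) (-g' u / g u ^ 2) u :=
          (hderiv u hu.1).inv (ne_of_gt (hgpos u hu))
        have h2 : HasDerivAt (fun u => c₁ * u) (c₁ * 1) u :=
          (hasDerivAt_id u).const_mul c₁
        have h3 := h1.sub h2
        rw [mul_one] at h3
        exact h3
      have hFcont : ContinuousOn F (Set.Icc 0 t₀) := fun u hu =>
        ((hFd u hu).continuousAt).continuousWithinAt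
      have hmono : MonotoneOn F (Set.Icc 0 t₀) := by
        apply monotoneOn_of_deriv_nonneg (convex_Icc 0 t₀) hFcont
        · intro u hu
          rw [interior_Icc] at hu
          exact (hFd u ⟨hu.1.le, hu.2.le⟩).differentiableAt.differentiableWithinAt
        · intro u hu
          rw [interior_Icc] at hu
          have hu' : u ∈ Set.Icc (0:ℝ) t₀ := ⟨hu.1.le, hu.2.le⟩
          rw [(hFd u hu').deriv]
          have h1 := hineq u hu.1.le
          have h2 : Real.sqrt (c₂ / c₁) < g u := hbig u hu'
          have h3 : c₂ / c₁ < g u ^ 2 := by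
            calc c₂ / c₁ = Real.sqrt (c₂ / c₁) ^ 2 := hK2.symm
            _ < g u ^ 2 := by nlinarith [hKnn]
          have h4 : c₂ < c₁ * g u ^ 2 := by
            rw [div_lt_iff₀ hc₁] at h3; linarith
          have h5 : g' u ≤ -(c₁ * g u ^ 2) := by nlinarith
          have h6 : (0:ℝ) < g u ^ 2 := pow_pos (hgpos u hu') 2
          have : c₁ ≤ -g' u / g u ^ 2 := by
            rw [le_div_iff₀ h6]; nlinarith
          linarith
      have h0mem : (0:ℝ) ∈ Set.Icc (0:ℝ) t₀ := ⟨le_rfl, ht₀0⟩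
      have htmem : t₀ ∈ Set.Icc (0:ℝ) t₀ := ⟨ht₀0, le_rfl⟩
      have hFF := hmono h0mem htmem ht₀0
      have hg0 : 0 < g 0 := hgpos 0 h0mem
      have hgt₀ : 0 < g t₀ := hgpos t₀ htmem
      have hinv0 : 0 < (g 0)⁻¹ := inv_pos.2 hg0
      have : c₁ * t₀ ≤ (g t₀)⁻¹ := by
        simp only [hF] at hFF
        nlinarith
      have hc₁t : c₁ / 2 ≤ (g t₀)⁻¹ := by nlinarith
      have hmc : g t₀ * (g t₀)⁻¹ = 1 := mul_inv_cancel₀ (ne_of_gt hgt₀)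
      have : g t₀ ≤ 2 / c₁ := by
        rw [le_div_iff₀ hc₁]
        nlinarith
      linarith [hKnn]
end

section
/- Let X, Y be Hilbert spaces, A ∈ L(X;Y), β > 0, and fix z₀ ∈ Y. Define J(ζ) = (1/2)‖ζ‖²_X + (1/(2β))‖Aζ + z₀‖²_Y on X, and Ĵ*(w) = (1/2)⟨(A A* + β I) w, w⟩ + ⟨w, z₀⟩ on Y. Then J attains a unique minimizer ζ* and Ĵ* attains a unique minimizer w* = −(A A* + β I)⁻¹ z₀, the duality relation inf_X J = −inf_Y Ĵ* holds, and ζ* = A* w*. -/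
open ContinuousLinearMap

set_option maxHeartbeats 1600000

variable {X Y : Type*}
  [NormedAddCommGroup X] [InnerProductSpace ℝ X] [CompleteSpace X]
  [NormedAddCommGroup Y] [InnerProductSpace ℝ Y] [CompleteSpace Y]

/-- The primal functional `J(ζ) = ½‖ζ‖² + (1/2β)‖Aζ + z₀‖²`. -/
noncomputable def Jfun (A : X →L[ℝ] Y) (β : ℝ) (z₀ : Y) (ζ : X) : ℝ :=
  (1 / 2) * ‖ζ‖ ^ 2 + (1 / (2 * β)) * ‖A ζ + z₀‖ ^ 2

/-- The dual functional `Ĵ*(w) = ½⟨(AA* + βI)w, w⟩ + ⟨w, z₀⟩`. -/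
noncomputable def Jdual (A : X →L[ℝ] Y) (β : ℝ) (z₀ : Y) (w : Y) : ℝ :=
  (1 / 2) * (inner ℝ (A ((adjoint A) w) + β • w) w : ℝ) + (inner ℝ w z₀ : ℝ)

/-- Solvability of the normal equation, via Lax–Milgram. -/
lemma exists_sol (A : X →L[ℝ] Y) (β : ℝ) (hβ : 0 < β) (z₀ : Y) :
    ∃ w : Y, A ((adjoint A) w) + β • w = -z₀ := by
  set T : Y →L[ℝ] Y := A.comp (adjoint A) + β • ContinuousLinearMap.id ℝ Y with hT
  have hTapp : ∀ w, T w = A ((adjoint A) w) + β • w := fun w => rfl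
  set B : Y →L[ℝ] Y →L[ℝ] ℝ := (innerSL ℝ).comp T with hB
  have hBapp : ∀ v w, B v w = (inner ℝ (T v) w : ℝ) := fun v w => rfl
  have hco : IsCoercive B := by
    refine ⟨β, hβ, fun u => ?_⟩
    have : B u u = ‖(adjoint A) u‖ ^ 2 + β * ‖u‖ ^ 2 := by
      rw [hBapp, hTapp, inner_add_left, real_inner_smul_left,
        ← adjoint_inner_right, real_inner_self_eq_norm_sq, real_inner_self_eq_norm_sq]
    nlinarith [sq_nonneg ‖(adjoint A) u‖]
  obtain ⟨v, hv⟩ := (ContinuousLinearEquiv.surjective hco.continuousLinearEquivOfBilin) (-z₀)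
  refine ⟨v, ?_⟩
  have : T v = hco.continuousLinearEquivOfBilin v := by
    apply ext_inner_right ℝ
    intro w
    rw [hco.continuousLinearEquivOfBilin_apply, hBapp]
  rw [← hTapp, this, hv]

theorem stmt7 (A : X →L[ℝ] Y) (β : ℝ) (hβ : 0 < β) (z₀ : Y) :
    ∃ ζstar : X, ∃ wstar : Y,
      (∀ ζ : X, Jfun A β z₀ ζstar ≤ Jfun A β z₀ ζ) ∧
      (∀ ζ : X, Jfun A β z₀ ζ = Jfun A β z₀ ζstar → ζ = ζstar) ∧
      (∀ w : Y, Jdual A β z₀ wstar ≤ Jdual A β z₀ w) ∧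
      (∀ w : Y, Jdual A β z₀ w = Jdual A β z₀ wstar → w = wstar) ∧
      A ((adjoint A) wstar) + β • wstar = -z₀ ∧
      Jfun A β z₀ ζstar = -Jdual A β z₀ wstar ∧
      ζstar = (adjoint A) wstar := by
  obtain ⟨wstar, hw⟩ := exists_sol A β hβ z₀
  set ζstar : X := (adjoint A) wstar with hζ
  have hβ' : (β : ℝ) ≠ 0 := ne_of_gt hβ
  -- A ζstar + z₀ = -(β • wstar)
  have hstar : A ζstar + z₀ = -(β • wstar) := by
    rw [hζ]
    have : A ((adjoint A) wstar) = -z₀ - β • wstar := by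
      rw [eq_sub_iff_add_eq]; exact hw
    rw [this]; abel
  -- key primal identity
  have key1 : ∀ ζ : X, Jfun A β z₀ ζ =
      Jfun A β z₀ ζstar + (1/2) * ‖ζ - ζstar‖ ^ 2 + (1/(2*β)) * ‖A (ζ - ζstar)‖ ^ 2 := by
    intro ζ
    obtain ⟨h, rfl⟩ : ∃ h, ζ = ζstar + h := ⟨ζ - ζstar, by abel⟩
    simp only [add_sub_cancel_left, Jfun, map_add]
    rw [norm_add_sq_real ζstar h,
      show A ζstar + A h + z₀ = (A ζstar + z₀) + A h by abel,
      norm_add_sq_real (A ζstar + z₀) (A h), hstar]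
    have hc : (inner ℝ (-(β • wstar)) (A h) : ℝ) = -(β * inner ℝ ζstar h) := by
      rw [inner_neg_left, real_inner_smul_left, ← adjoint_inner_left]
    rw [hc]
    field_simp
    ring
  -- key dual identity
  have key2 : ∀ w : Y, Jdual A β z₀ w =
      Jdual A β z₀ wstar + (1/2) * (‖(adjoint A) (w - wstar)‖ ^ 2 + β * ‖w - wstar‖ ^ 2) := by
    intro w
    obtain ⟨h, rfl⟩ : ∃ h, w = wstar + h := ⟨w - wstar, by abel⟩
    simp only [add_sub_cancel_left, Jdual, map_add, smul_add]
    have hcross : (inner ℝ ((adjoint A) wstar) ((adjoint A) h) : ℝ)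
        + β * inner ℝ wstar h = -(inner ℝ z₀ h) := by
      have e : (inner ℝ (A ((adjoint A) wstar) + β • wstar) h : ℝ) = inner ℝ (-z₀ : Y) h := by
        rw [hw]
      rw [inner_add_left, real_inner_smul_left, ← adjoint_inner_right, inner_neg_left] at e
      exact e
    have a1 : (inner ℝ (A ((adjoint A) wstar)) h : ℝ)
        = inner ℝ ((adjoint A) wstar) ((adjoint A) h) := by rw [← adjoint_inner_right]
    have a2 : (inner ℝ (A ((adjoint A) h)) wstar : ℝ)
        = inner ℝ ((adjoint A) wstar) ((adjoint A) h) := by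
      rw [← adjoint_inner_right]; exact real_inner_comm _ _
    have a3 : (inner ℝ (A ((adjoint A) h)) h : ℝ) = ‖(adjoint A) h‖ ^ 2 := by
      rw [← adjoint_inner_right, real_inner_self_eq_norm_sq]
    have a4 : (inner ℝ h h : ℝ) = ‖h‖ ^ 2 := real_inner_self_eq_norm_sq h
    have a5 : (inner ℝ h wstar : ℝ) = inner ℝ wstar h := real_inner_comm _ _
    simp only [inner_add_left, inner_add_right, real_inner_smul_left]
    rw [a1, a2, a3, a4, a5]
    have a6 : (inner ℝ z₀ h : ℝ) = inner ℝ h z₀ := real_inner_comm _ _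
    linarith [hcross, a6]
  -- minimum value equality
  have hval : Jfun A β z₀ ζstar = -Jdual A β z₀ wstar := by
    have e : (inner ℝ (A ((adjoint A) wstar) + β • wstar) wstar : ℝ) = inner ℝ (-z₀ : Y) wstar := by
      rw [hw]
    have e2 : ‖(adjoint A) wstar‖ ^ 2 + β * ‖wstar‖ ^ 2 = -(inner ℝ z₀ wstar) := by
      rw [inner_add_left, real_inner_smul_left, ← adjoint_inner_right, inner_neg_left,
        real_inner_self_eq_norm_sq, real_inner_self_eq_norm_sq] at e
      exact e
    have e3 : Jdual A β z₀ wstar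
        = (1/2) * (inner ℝ (-z₀ : Y) wstar : ℝ) + (inner ℝ wstar z₀ : ℝ) := by
      rw [Jdual, hw]
    have e4 : (inner ℝ wstar z₀ : ℝ) = inner ℝ z₀ wstar := real_inner_comm _ _
    have e5 : Jfun A β z₀ ζstar = (1/2) * ‖ζstar‖ ^ 2 + (1/(2*β)) * (β * ‖wstar‖)^2 := by
      rw [Jfun, hstar, norm_neg, norm_smul, Real.norm_eq_abs, abs_of_pos hβ]
    rw [e5, e3, inner_neg_left, e4, hζ]
    field_simp
    nlinarith [e2]
  refine ⟨ζstar, wstar, ?_, ?_, ?_, ?_, hw, hval, rfl⟩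
  · intro ζ
    rw [key1 ζ]
    have h1 : (0:ℝ) ≤ (1/2) * ‖ζ - ζstar‖ ^ 2 := by positivity
    have h2 : (0:ℝ) ≤ (1/(2*β)) * ‖A (ζ - ζstar)‖ ^ 2 := by positivity
    linarith
  · intro ζ hζ'
    rw [key1 ζ] at hζ'
    have h2 : (0:ℝ) ≤ (1/(2*β)) * ‖A (ζ - ζstar)‖ ^ 2 := by positivity
    have : ‖ζ - ζstar‖ ^ 2 ≤ 0 := by linarith
    have h0 : ‖ζ - ζstar‖ = 0 := by nlinarith [norm_nonneg (ζ - ζstar)]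
    exact sub_eq_zero.mp (norm_eq_zero.mp h0)
  · intro w
    rw [key2 w]
    have h1 : (0:ℝ) ≤ ‖(adjoint A) (w - wstar)‖ ^ 2 := by positivity
    have h2 : (0:ℝ) ≤ β * ‖w - wstar‖ ^ 2 := by positivity
    linarith
  · intro w hw'
    rw [key2 w] at hw'
    have h1 : (0:ℝ) ≤ ‖(adjoint A) (w - wstar)‖ ^ 2 := by positivity
    have : β * ‖w - wstar‖ ^ 2 ≤ 0 := by linarith
    have hle : ‖w - wstar‖ ^ 2 ≤ 0 := by
      rcases le_or_gt (‖w - wstar‖ ^ 2) 0 with h | h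
      · exact h
      · exfalso; nlinarith [mul_pos hβ h]
    have h0 : ‖w - wstar‖ = 0 := by nlinarith [norm_nonneg (w - wstar)]
    exact sub_eq_zero.mp (norm_eq_zero.mp h0)
end

section
/- Pole-shifting consequence of Kalman: Let D ∈ ℝ^{n×n} and E ∈ ℝ^{n×m} satisfy the Kalman rank condition rank(E, DE, ..., D^{n−1}E) = n. Then there exists K ∈ ℝ^{m×n} such that every eigenvalue of D + E K equals −1 (i.e., the characteristic polynomial of D + E K is (X+1)^n). -/
open Polynomial Matrix Submodule

/-- The Kalman controllability matrix `(E, DE, …, D^{steps-1}E)`,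
with column blocks indexed by `Fin steps`. -/
noncomputable def kalmanMatrix {k l : Type*} [Fintype k] [DecidableEq k] [Fintype l]
    (steps : ℕ) (D : Matrix k k ℝ) (E : Matrix k l ℝ) :
    Matrix k (Fin steps × l) ℝ :=
  Matrix.of fun i p => (D ^ (p.1 : ℕ) * E) i p.2

section Aux

variable {n m : ℕ}

/-- Nilpotent real matrices have characteristic polynomial `X ^ n`. -/
lemma nilpCharpoly (N : Matrix (Fin n) (Fin n) ℝ) (h : IsNilpotent N) :
    N.charpoly = X ^ n := by
  have := Matrix.isNilpotent_charpoly_sub_pow_of_isNilpotent h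
  rw [Fintype.card_fin] at this
  exact sub_eq_zero.mp this.eq_zero

/-- Charpoly shift: if `A + 1` has charpoly `X ^ n` then `A` has charpoly `(X + 1) ^ n`. -/
lemma charpolyShift (A : Matrix (Fin n) (Fin n) ℝ)
    (h : (A + 1).charpoly = X ^ n) : A.charpoly = (X + 1) ^ n := by
  set σ : ℝ[X] →+* ℝ[X] := eval₂RingHom Polynomial.C (X + 1) with hσ
  have key : σ ((A + 1).charpoly) = A.charpoly := by
    rw [Matrix.charpoly, Matrix.charpoly, RingHom.map_det]
    congr 1
    ext i j
    by_cases hij : i = j <;>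
      simp [hσ, charmatrix, hij, Matrix.one_apply, Matrix.map_apply]
  rw [h] at key
  rw [← key]
  simp [hσ]

lemma mulVecMemOfCols {E : Matrix (Fin n) (Fin m) ℝ}
    {S : Submodule ℝ (Fin n → ℝ)} (hcols : ∀ j, Eᵀ j ∈ S) (u : Fin m → ℝ) :
    E.mulVec u ∈ S := by
  have : E.mulVec u = ∑ j, u j • Eᵀ j := by
    ext i
    simp [Matrix.mulVec, dotProduct, Matrix.transpose_apply, Finset.sum_apply, mul_comm]
  rw [this]
  exact Submodule.sum_mem S fun j _ => Submodule.smul_mem S _ (hcols j)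

/-- Any subspace invariant under `D` and containing the columns of `E` is everything,
provided the Kalman rank condition holds. -/
lemma kalmanInvariant (D : Matrix (Fin n) (Fin n) ℝ)
    (E : Matrix (Fin n) (Fin m) ℝ) (hK : (kalmanMatrix n D E).rank = n)
    (S : Submodule ℝ (Fin n → ℝ))
    (hinv : ∀ x ∈ S, D.mulVec x ∈ S) (hcols : ∀ j, Eᵀ j ∈ S) : S = ⊤ := by
  have hpow : ∀ (j : ℕ) (v : Fin n → ℝ), v ∈ S → (D ^ j).mulVec v ∈ S := by
    intro j
    induction j with
    | zero => intro v hv; simpa using hv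
    | succ j ih =>
      intro v hv
      have : (D ^ (j+1)).mulVec v = D.mulVec ((D ^ j).mulVec v) := by
        rw [Matrix.mulVec_mulVec, pow_succ']
      rw [this]
      exact hinv _ (ih v hv)
  have hspan : Submodule.span ℝ (Set.range (kalmanMatrix n D E)ᵀ) = ⊤ := by
    apply Submodule.eq_top_of_finrank_eq
    rw [show Set.range (kalmanMatrix n D E)ᵀ = Set.range (kalmanMatrix n D E).col from rfl,
      ← Matrix.rank_eq_finrank_span_cols, hK]
    simp [Module.finrank_pi]
  have hle : Submodule.span ℝ (Set.range (kalmanMatrix n D E)ᵀ) ≤ S := by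
    rw [Submodule.span_le]
    rintro _ ⟨p, rfl⟩
    have hcol : (kalmanMatrix n D E)ᵀ p = (D ^ (p.1 : ℕ)).mulVec (Eᵀ p.2) := by
      ext i
      simp [kalmanMatrix, Matrix.transpose_apply, Matrix.mulVec, dotProduct,
        Matrix.mul_apply]
    rw [hcol]
    exact hpow _ _ (hcols p.2)
  rw [← top_le_iff]
  exact hspan ▸ hle

/-- The controlled trajectory `x₀ = E u₀`, `x_{i+1} = D' x_i + E u_{i+1}`. -/
noncomputable def chainX (D' : Matrix (Fin n) (Fin n) ℝ) (E : Matrix (Fin n) (Fin m) ℝ)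
    (u : ℕ → Fin m → ℝ) : ℕ → (Fin n → ℝ)
  | 0 => E.mulVec (u 0)
  | (i+1) => D'.mulVec (chainX D' E u i) + E.mulVec (u (i+1))

lemma chainXCongr (D' : Matrix (Fin n) (Fin n) ℝ) (E : Matrix (Fin n) (Fin m) ℝ)
    {u u' : ℕ → Fin m → ℝ} : ∀ i, (∀ j ≤ i, u j = u' j) → chainX D' E u i = chainX D' E u' i
  | 0, h => by simp [chainX, h 0 le_rfl]
  | (i+1), h => by
    simp only [chainX]
    rw [chainXCongr D' E i (fun j hj => h j (hj.trans i.le_succ)), h (i+1) le_rfl]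

/-- Greedy construction of a linearly independent controlled trajectory (Heymann-type). -/
lemma chainExists (D' : Matrix (Fin n) (Fin n) ℝ) (E : Matrix (Fin n) (Fin m) ℝ)
    (Hspan : ∀ S : Submodule ℝ (Fin n → ℝ),
      (∀ x ∈ S, D'.mulVec x ∈ S) → (∀ j, Eᵀ j ∈ S) → S = ⊤) :
    ∀ k ≤ n, ∃ u : ℕ → Fin m → ℝ,
      LinearIndependent ℝ (fun i : Fin k => chainX D' E u i) := by
  intro k
  induction k with
  | zero => intro _; exact ⟨0, linearIndependent_empty_type⟩
  | succ k ih =>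
    intro hk
    obtain ⟨u, li⟩ := ih (Nat.le_of_succ_le hk)
    set x : ℕ → (Fin n → ℝ) := chainX D' E u with hx
    set S : Submodule ℝ (Fin n → ℝ) := Submodule.span ℝ (Set.range fun i : Fin k => x i)
      with hS
    have hSne : S ≠ ⊤ := by
      intro htop
      have h1 : Module.finrank ℝ S = k := by
        rw [hS, finrank_span_eq_card li, Fintype.card_fin]
      rw [htop, finrank_top] at h1
      simp only [Module.finrank_pi, Fintype.card_fin] at h1
      omega
    set y : Fin n → ℝ := if k = 0 then 0 else D'.mulVec (x (k-1)) with hy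
    have hcand : ∀ w, chainX D' E (Function.update u k w) k = y + E.mulVec w := by
      intro w
      rcases Nat.eq_zero_or_pos k with h0 | hpos
      · subst h0
        simp [chainX, hy, Function.update_self]
      · obtain ⟨k', rfl⟩ : ∃ k', k = k' + 1 := ⟨k - 1, by omega⟩
        simp only [chainX, hy, if_neg (Nat.succ_ne_zero k'), Nat.add_sub_cancel]
        have hc : chainX D' E (Function.update u (k'+1) w) k' = chainX D' E u k' :=
          chainXCongr D' E k' fun j hj => Function.update_of_ne (by omega) _ _
        rw [hc, Function.update_self]
    have hex : ∃ w, y + E.mulVec w ∉ S := by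
      by_contra hall
      push_neg at hall
      have hyS : y ∈ S := by simpa using hall 0
      have hcols : ∀ j, Eᵀ j ∈ S := by
        intro j
        have h1 := hall (Pi.single j 1)
        have h2 : E.mulVec (Pi.single j 1) = Eᵀ j := by
          ext i
          simp [Matrix.mulVec_single, Matrix.transpose_apply]
        have := Submodule.sub_mem S h1 hyS
        simpa [h2] using this
      have hgen : ∀ i : Fin k, D'.mulVec (x i) ∈ S := by
        intro i
        rcases lt_or_eq_of_le (Nat.succ_le_of_lt i.2) with h | h
        · have hx1 : x ((i:ℕ)+1) ∈ S := by
            apply Submodule.subset_span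
            exact ⟨⟨(i:ℕ)+1, h⟩, rfl⟩
          have : D'.mulVec (x i) = x ((i:ℕ)+1) - E.mulVec (u ((i:ℕ)+1)) := by
            simp [hx, chainX]
          rw [this]
          exact Submodule.sub_mem S hx1 (mulVecMemOfCols hcols _)
        · have : D'.mulVec (x i) = y := by
            rw [hy, if_neg (by omega)]
            have hik : (i:ℕ) = k - 1 := by omega
            rw [hik]
          rw [this]; exact hyS
      have hinv : ∀ v ∈ S, D'.mulVec v ∈ S := by
        intro v hv
        have : S ≤ Submodule.comap (D'.mulVecLin) S := by
          rw [hS, Submodule.span_le]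
          rintro _ ⟨i, rfl⟩
          simpa [Matrix.mulVecLin] using hgen i
        simpa [Matrix.mulVecLin] using this hv
      exact hSne (Hspan S hinv hcols)
    obtain ⟨w, hw⟩ := hex
    refine ⟨Function.update u k w, ?_⟩
    set u' := Function.update u k w with hu'
    have hagree : (fun i : Fin k => chainX D' E u' i) = fun i : Fin k => x i := by
      funext i
      exact (chainXCongr D' E i fun j hj => by
        rw [hu', Function.update_of_ne (by omega)]).symm
    have hsnoc : (fun i : Fin (k+1) => chainX D' E u' i) =
        Fin.snoc (fun i : Fin k => chainX D' E u' i) (chainX D' E u' k) := by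
      funext i
      refine Fin.lastCases ?_ (fun j => ?_) i
      · simp [Fin.snoc_last]
      · simp [Fin.snoc_castSucc]
    rw [hsnoc, linearIndependent_fin_snoc, hagree]
    exact ⟨li, by rw [hcand w]; exact hw⟩

/-- The auxiliary polynomials `q_0 = 1`, `q_{j+1} = X q_j + a_{n-1-j}`. -/
noncomputable def qpoly (a : ℕ → ℝ) (n : ℕ) : ℕ → ℝ[X]
  | 0 => 1
  | (j+1) => X * qpoly a n j + Polynomial.C (a (n - 1 - j))

lemma qpolyFormula (a : ℕ → ℝ) (n : ℕ) (ha : a n = 1) :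
    ∀ j ≤ n, qpoly a n j = ∑ i ∈ Finset.range (j+1), Polynomial.C (a (n - j + i)) * X ^ i := by
  intro j
  induction j with
  | zero => intro _; simp [qpoly, ha]
  | succ j ih =>
    intro hj
    rw [qpoly, ih (by omega), Finset.sum_range_succ' _ (j+1), Finset.mul_sum]
    congr 1
    · apply Finset.sum_congr rfl
      intro i hi
      have : n - (j+1) + (i+1) = n - j + i := by omega
      rw [this]; ring
    · have : n - (j+1) + 0 = n - 1 - j := by omega
      rw [this]; ring

end Aux

theorem stmt12 (n m : ℕ) (hn : 1 ≤ n) (hm : 1 ≤ m)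
    (D : Matrix (Fin n) (Fin n) ℝ) (E : Matrix (Fin n) (Fin m) ℝ)
    (hK : (kalmanMatrix n D E).rank = n) :
    ∃ K : Matrix (Fin m) (Fin n) ℝ,
      (D + E * K).charpoly = (Polynomial.X + 1) ^ n := by
  haveI : Nonempty (Fin n) := ⟨⟨0, hn⟩⟩
  set D' : Matrix (Fin n) (Fin n) ℝ := D + 1 with hD'
  -- invariance hypothesis for D'
  have Hspan : ∀ S : Submodule ℝ (Fin n → ℝ),
      (∀ x ∈ S, D'.mulVec x ∈ S) → (∀ j, Eᵀ j ∈ S) → S = ⊤ := by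
    intro S hinv hcols
    refine kalmanInvariant D E hK S ?_ hcols
    intro v hv
    have h1 : D'.mulVec v = D.mulVec v + v := by
      rw [hD', Matrix.add_mulVec, Matrix.one_mulVec]
    have := hinv v hv
    rw [h1] at this
    simpa using Submodule.sub_mem S this hv
  obtain ⟨u, li⟩ := chainExists D' E Hspan n le_rfl
  set x : ℕ → (Fin n → ℝ) := chainX D' E u with hxdef
  -- basis from the trajectory
  have hcard : Fintype.card (Fin n) = Module.finrank ℝ (Fin n → ℝ) := by
    simp [Module.finrank_pi]
  set b : Module.Basis (Fin n) ℝ (Fin n → ℝ) :=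
    basisOfLinearIndependentOfCardEqFinrank li hcard with hb
  have hbcoe : ⇑b = fun i : Fin n => x i := coe_basisOfLinearIndependentOfCardEqFinrank _ _
  -- feedback F
  set φ : (Fin n → ℝ) →ₗ[ℝ] (Fin m → ℝ) := b.constr ℝ (fun i : Fin n => u ((i:ℕ)+1)) with hφ
  set F : Matrix (Fin m) (Fin n) ℝ := LinearMap.toMatrix' φ with hF
  have hFmul : ∀ v, F.mulVec v = φ v := by
    intro v
    rw [hF, ← Matrix.toLin'_apply, Matrix.toLin'_toMatrix']
  set A' : Matrix (Fin n) (Fin n) ℝ := D' + E * F with hA'def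
  have hA' : ∀ i : ℕ, i < n → A'.mulVec (x i) = x (i+1) := by
    intro i hi
    have hφx : φ (x i) = u (i+1) := by
      have : x i = b ⟨i, hi⟩ := by rw [hbcoe]
      rw [this, hφ, Module.Basis.constr_basis]
    rw [hA'def, Matrix.add_mulVec, ← Matrix.mulVec_mulVec, hFmul, hφx]
    simp [hxdef, chainX]
  -- characteristic polynomial data of A'
  set p : ℝ[X] := A'.charpoly with hp
  set a : ℕ → ℝ := fun i => p.coeff i with ha
  have hpdeg : p.natDegree = n := by
    rw [hp, Matrix.charpoly_natDegree_eq_dim, Fintype.card_fin]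
  have han : a n = 1 := by
    rw [ha, ← hpdeg]
    exact (Matrix.charpoly_monic A').coeff_natDegree
  have hqn : qpoly a n n = p := by
    rw [qpolyFormula a n han n le_rfl]
    have hlt : p.natDegree < n + 1 := by rw [hpdeg]; omega
    conv_rhs => rw [p.as_sum_range' (n+1) hlt]
    apply Finset.sum_congr rfl
    intro i _
    rw [Polynomial.C_mul_X_pow_eq_monomial]
    have h0 : n - n + i = i := by omega
    rw [h0]
  -- the z vectors
  set z : ℕ → (Fin n → ℝ) := fun j => (Polynomial.aeval A' (qpoly a n j)).mulVec (x 0)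
    with hz
  have hz0 : z 0 = x 0 := by simp [hz, qpoly]
  have hzrec : ∀ j : ℕ, z (j+1) = A'.mulVec (z j) + a (n - 1 - j) • x 0 := by
    intro j
    rw [hz]
    simp only [qpoly, map_add, _root_.map_mul, Polynomial.aeval_X, Polynomial.aeval_C]
    rw [Matrix.add_mulVec]
    congr 1
    · rw [← Matrix.mulVec_mulVec]
    · rw [Algebra.algebraMap_eq_smul_one, Matrix.smul_mulVec, Matrix.one_mulVec]
  have hzn : z n = 0 := by
    rw [hz]
    simp only [hqn, hp, Matrix.aeval_self_charpoly, Matrix.zero_mulVec]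
  -- z is a basis: triangularity & spanning
  set T : ℕ → Submodule ℝ (Fin n → ℝ) := fun j => Submodule.span ℝ (x '' Set.Iio j) with hT
  have hTmap : ∀ j, j < n → ∀ v ∈ T j, A'.mulVec v ∈ T (j+1) := by
    intro j hj v hv
    have hle : T j ≤ Submodule.comap (A'.mulVecLin) (T (j+1)) := by
      rw [hT, Submodule.span_le]
      rintro _ ⟨i, hi, rfl⟩
      simp only [Set.mem_Iio] at hi
      refine Submodule.mem_comap.mpr ?_
      have h2 : A'.mulVecLin (x i) = x (i+1) := by
        rw [Matrix.mulVecLin_apply]; exact hA' i (by omega)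
      rw [h2]
      exact Submodule.subset_span ⟨i+1, by simp only [Set.mem_Iio]; omega, rfl⟩
    simpa [Matrix.mulVecLin] using hle hv
  have hx0T : ∀ j : ℕ, x 0 ∈ T (j+1) :=
    fun j => Submodule.subset_span ⟨0, by simp, rfl⟩
  have hTri : ∀ j, j < n → z j - x j ∈ T j := by
    intro j
    induction j with
    | zero => intro _; rw [hz0]; simp
    | succ j ih =>
      intro hj
      have hj' : j < n := by omega
      have h1 : z (j+1) - x (j+1) = A'.mulVec (z j - x j) + a (n - 1 - j) • x 0 := by
        rw [hzrec j, ← hA' j hj', Matrix.mulVec_sub]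
        abel
      rw [h1]
      exact Submodule.add_mem _ (hTmap j hj' _ (ih hj'))
        (Submodule.smul_mem _ _ (hx0T j))
  set Z : Submodule ℝ (Fin n → ℝ) := Submodule.span ℝ (Set.range fun j : Fin n => z j)
    with hZ
  have hxZ : ∀ i, i < n → x i ∈ Z := by
    intro i
    induction i using Nat.strong_induction_on with
    | _ i IH =>
      intro hi
      have hzi : z i ∈ Z := Submodule.subset_span ⟨⟨i, hi⟩, rfl⟩
      have hTiZ : T i ≤ Z := by
        rw [hT, Submodule.span_le]
        rintro _ ⟨j, hj, rfl⟩
        simp only [Set.mem_Iio] at hj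
        exact IH j hj (by omega)
      have : x i = z i - (z i - x i) := by abel
      rw [this]
      exact Submodule.sub_mem Z hzi (hTiZ (hTri i hi))
  have hZtop : ⊤ ≤ Z := by
    have hxspan : Submodule.span ℝ (Set.range fun i : Fin n => x i) = ⊤ := by
      rw [← hbcoe]; exact b.span_eq
    rw [← hxspan, Submodule.span_le]
    rintro _ ⟨i, rfl⟩
    exact hxZ i i.2
  set zb : Module.Basis (Fin n) ℝ (Fin n → ℝ) :=
    basisOfTopLeSpanOfCardEqFinrank (fun j : Fin n => z j) hZtop hcard with hzb
  have hzbcoe : ⇑zb = fun j : Fin n => z j := coe_basisOfTopLeSpanOfCardEqFinrank _ _ _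
  -- functional ℓ and the rank one correction
  set ℓ : (Fin n → ℝ) →ₗ[ℝ] ℝ := zb.constr ℝ (fun j : Fin n => a (n - 1 - j)) with hℓ
  have hℓz : ∀ j : ℕ, ∀ hj : j < n, ℓ (z j) = a (n - 1 - j) := by
    intro j hj
    have : z j = zb ⟨j, hj⟩ := by rw [hzbcoe]
    rw [this, hℓ, Module.Basis.constr_basis]
  set g : Fin n → (Fin n → ℝ) := fun c => fun j => if c = j then (1:ℝ) else 0 with hg
  set K₂ : Matrix (Fin m) (Fin n) ℝ := Matrix.of fun r c => u 0 r * ℓ (g c)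
    with hK₂
  have hK₂mul : ∀ v, E.mulVec (K₂.mulVec v) = ℓ v • x 0 := by
    intro v
    have hℓv : ℓ v = ∑ c, v c * ℓ (g c) := by
      conv_lhs => rw [pi_eq_sum_univ v]
      rw [map_sum]
      simp only [_root_.map_smul, smul_eq_mul, hg]
    have h1 : K₂.mulVec v = ℓ v • u 0 := by
      ext r
      rw [hℓv]
      simp only [hK₂, Matrix.mulVec, dotProduct, Matrix.of_apply, Pi.smul_apply,
        smul_eq_mul, Finset.sum_mul]
      apply Finset.sum_congr rfl
      intro c _
      ring
    rw [h1, Matrix.mulVec_smul]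
    congr 1
  set N : Matrix (Fin n) (Fin n) ℝ := A' + E * K₂ with hN
  have hNz : ∀ j : ℕ, j < n → N.mulVec (z j) = z (j+1) := by
    intro j hj
    rw [hN, Matrix.add_mulVec, ← Matrix.mulVec_mulVec, hK₂mul, hℓz j hj, hzrec j]
  have hNpow : ∀ i j : ℕ, j < n → n ≤ i + j → (N ^ i).mulVec (z j) = 0 := by
    intro i
    induction i with
    | zero => intro j hj hij; omega
    | succ i ih =>
      intro j hj hij
      have h1 : ∀ w, (N ^ (i+1)).mulVec w = (N ^ i).mulVec (N.mulVec w) := by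
        intro w
        rw [Matrix.mulVec_mulVec, ← pow_succ]
      rw [h1, hNz j hj]
      rcases lt_or_ge (j+1) n with h | h
      · exact ih (j+1) h (by omega)
      · have : j + 1 = n := by omega
        rw [this, hzn, Matrix.mulVec_zero]
  have hNnil : IsNilpotent N := by
    refine ⟨n, ?_⟩
    apply Matrix.toLin'.injective
    apply zb.ext
    intro j
    rw [hzbcoe]
    simp only [Matrix.toLin'_apply, map_zero, LinearMap.zero_apply]
    exact hNpow n j j.2 (by omega)
  have hNchar : N.charpoly = X ^ n := nilpCharpoly N hNnil
  refine ⟨F + K₂, ?_⟩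
  apply charpolyShift
  have : D + E * (F + K₂) + 1 = N := by
    rw [hN, hA'def, hD', Matrix.mul_add]
    abel
  rw [this, hNchar]
end

section
/- Equivalence of stabilization and weak observability in an abstract Hilbert space setting: Let X, Y be Hilbert spaces, S ∈ L(Y;Y) (the solution operator), A ∈ L(X;Y) (the control-to-state map), and C, ε ≥ 0. Then the following are equivalent: (1) for every z₀ ∈ Y there exists ζ ∈ X with ‖S z₀ + A ζ‖ ≤ ε ‖z₀‖ and ‖ζ‖ ≤ C ‖z₀‖; (2) for every w ∈ Y, ⟨w, S z₀⟩ ≤ C ‖z₀‖ ‖A* w‖ + ε ‖z₀‖ ‖w‖ holds for all z₀ ∈ Y, i.e. ‖S* w‖ ≤ C ‖A* w‖ + ε ‖w‖ for all w ∈ Y. -/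
open ContinuousLinearMap

open scoped RealInnerProductSpace

section StabilizationAux

variable {X Y : Type*}
    [NormedAddCommGroup X] [InnerProductSpace ℝ X] [CompleteSpace X]
    [NormedAddCommGroup Y] [InnerProductSpace ℝ Y] [CompleteSpace Y]

/-- Solvability of the regularized normal equation `(A*A + t)ζ = b`. -/
lemma surj_reg (A : X →L[ℝ] Y) {t : ℝ} (ht : 0 < t) (b : X) :
    ∃ ζ : X, adjoint A (A ζ) + t • ζ = b := by
  set P : X →L[ℝ] X := adjoint A ∘L A + t • ContinuousLinearMap.id ℝ X with hPdef
  have hPapp : ∀ u, P u = adjoint A (A u) + t • u := fun u => rfl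
  have hinner : ∀ u, ⟪P u, u⟫ = ‖A u‖ ^ 2 + t * ‖u‖ ^ 2 := by
    intro u
    rw [hPapp, inner_add_left, real_inner_smul_left, adjoint_inner_left,
      real_inner_self_eq_norm_sq, real_inner_self_eq_norm_sq]
  have hlow : ∀ u, ‖u‖ ≤ t⁻¹ * ‖P u‖ := by
    intro u
    have h1 : t * ‖u‖ ^ 2 ≤ ‖P u‖ * ‖u‖ := by
      calc t * ‖u‖ ^ 2 ≤ ‖A u‖ ^ 2 + t * ‖u‖ ^ 2 := by nlinarith [sq_nonneg ‖A u‖]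
        _ = ⟪P u, u⟫ := (hinner u).symm
        _ ≤ ‖P u‖ * ‖u‖ := real_inner_le_norm _ _
    rcases eq_or_lt_of_le (norm_nonneg u) with h0 | h0
    · rw [← h0]; positivity
    · rw [le_inv_mul_iff₀ ht]
      nlinarith
  have hanti : AntilipschitzWith (t⁻¹).toNNReal P := by
    apply P.antilipschitz_of_bound
    intro x
    calc ‖x‖ ≤ t⁻¹ * ‖P x‖ := hlow x
      _ = (t⁻¹).toNNReal * ‖P x‖ := by
          rw [Real.coe_toNNReal _ (by positivity)]
  have hclosed : IsClosed (Set.range P) :=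
    hanti.isClosed_range P.uniformContinuous
  have hrange : IsClosed ((LinearMap.range (P : X →ₗ[ℝ] X) : Submodule ℝ X) : Set X) := by
    have : ((LinearMap.range (P : X →ₗ[ℝ] X) : Submodule ℝ X) : Set X) = Set.range P := by
      ext x; simp [LinearMap.mem_range]
    rw [this]; exact hclosed
  haveI : CompleteSpace (LinearMap.range (P : X →ₗ[ℝ] X) : Submodule ℝ X) :=
    hrange.completeSpace_coe
  have horth : (LinearMap.range (P : X →ₗ[ℝ] X) : Submodule ℝ X)ᗮ = ⊥ := by
    rw [Submodule.eq_bot_iff]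
    intro v hv
    have h0 : ⟪P v, v⟫ = 0 := by
      have := (Submodule.mem_orthogonal _ v).mp hv (P v) (LinearMap.mem_range_self _ v)
      simpa [real_inner_comm] using this
    rw [hinner v] at h0
    have hv0 : ‖v‖ ^ 2 = 0 := by nlinarith [sq_nonneg ‖A v‖, sq_nonneg ‖v‖]
    simpa using (pow_eq_zero_iff (by norm_num)).mp hv0
  have htop : (LinearMap.range (P : X →ₗ[ℝ] X) : Submodule ℝ X) = ⊤ :=
    Submodule.orthogonal_eq_bot_iff.mp horth
  have hb : b ∈ LinearMap.range (P : X →ₗ[ℝ] X) := htop ▸ Submodule.mem_top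
  obtain ⟨ζ, hζ⟩ := hb
  exact ⟨ζ, hζ⟩


/-- The image of a closed ball under a bounded operator between Hilbert spaces is closed. -/
lemma mem_image_closedBall_of_mem_closure (A : X →L[ℝ] Y) {R : ℝ} (hR : 0 ≤ R) {v : Y}
    (hv : v ∈ closure (A '' Metric.closedBall (0 : X) R)) :
    ∃ ζ : X, ‖ζ‖ ≤ R ∧ A ζ = v := by
  set t : ℕ → ℝ := fun n => 1 / ((n : ℝ) + 1) with htdef
  have htpos : ∀ n, 0 < t n := fun n => by positivity
  have hζex : ∀ n : ℕ, ∃ ζ : X, adjoint A (A ζ) + t n • ζ = adjoint A v :=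
    fun n => surj_reg A (htpos n) (adjoint A v)
  choose ζ hζ using hζex
  -- minimization property
  have hmin : ∀ n (ξ : X), ‖A (ζ n) - v‖ ^ 2 + t n * ‖ζ n‖ ^ 2
      ≤ ‖A ξ - v‖ ^ 2 + t n * ‖ξ‖ ^ 2 := by
    intro n ξ
    set d := ξ - ζ n with hd
    have key : ⟪A (ζ n) - v, A d⟫ + t n * ⟪ζ n, d⟫ = 0 := by
      have h1 : ⟪A (ζ n) - v, A d⟫ = ⟪adjoint A (A (ζ n) - v), d⟫ :=
        (adjoint_inner_left A d _).symm
      have h2 : t n * ⟪ζ n, d⟫ = ⟪t n • ζ n, d⟫ := (real_inner_smul_left _ _ _).symm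
      rw [h1, h2, ← inner_add_left]
      have : adjoint A (A (ζ n) - v) + t n • ζ n = 0 := by
        rw [map_sub]
        linear_combination (norm := module) hζ n
      rw [this, inner_zero_left]
    have e1 : A ξ - v = (A (ζ n) - v) + A d := by rw [hd, map_sub]; abel
    have e2 : ξ = ζ n + d := by rw [hd]; abel
    have n1 : ‖A ξ - v‖ ^ 2 = ‖A (ζ n) - v‖ ^ 2 + 2 * ⟪A (ζ n) - v, A d⟫ + ‖A d‖ ^ 2 := by
      rw [e1]; exact norm_add_sq_real _ _
    have n2 : ‖ξ‖ ^ 2 = ‖ζ n‖ ^ 2 + 2 * ⟪ζ n, d⟫ + ‖d‖ ^ 2 := by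
      rw [e2]; exact norm_add_sq_real _ _
    nlinarith [sq_nonneg ‖A d‖, sq_nonneg ‖d‖, (htpos n).le,
      mul_nonneg (htpos n).le (sq_nonneg ‖d‖)]
  -- value bound
  have hbound : ∀ n, ‖A (ζ n) - v‖ ^ 2 + t n * ‖ζ n‖ ^ 2 ≤ t n * R ^ 2 := by
    intro n
    apply le_of_forall_sub_le
    intro δ hδ
    obtain ⟨y', hy', hdist⟩ := Metric.mem_closure_iff.mp hv (Real.sqrt δ) (by positivity)
    obtain ⟨ξ, hξmem, rfl⟩ := hy'
    have hξR : ‖ξ‖ ≤ R := by simpa using hξmem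
    have h1 : ‖A ξ - v‖ ^ 2 < δ := by
      have : ‖A ξ - v‖ < Real.sqrt δ := by
        rw [← dist_eq_norm] at *
        rwa [dist_comm] at hdist
      nlinarith [Real.sq_sqrt hδ.le, norm_nonneg (A ξ - v), Real.sqrt_nonneg δ]
    have h2 : t n * ‖ξ‖ ^ 2 ≤ t n * R ^ 2 := by
      apply mul_le_mul_of_nonneg_left _ (htpos n).le
      nlinarith [norm_nonneg ξ]
    nlinarith [hmin n ξ]
  have hnorm : ∀ n, ‖ζ n‖ ≤ R := by
    intro n
    have h := hbound n
    have h2 : t n * ‖ζ n‖ ^ 2 ≤ t n * R ^ 2 := by nlinarith [sq_nonneg ‖A (ζ n) - v‖]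
    have h3 : ‖ζ n‖ ^ 2 ≤ R ^ 2 := le_of_mul_le_mul_left h2 (htpos n)
    nlinarith [norm_nonneg (ζ n)]
  have hres : ∀ n, ‖A (ζ n) - v‖ ^ 2 ≤ t n * R ^ 2 := by
    intro n
    nlinarith [hbound n, mul_nonneg (htpos n).le (sq_nonneg ‖ζ n‖)]
  -- monotonicity of norms and Cauchy estimate
  have hmono : ∀ m n : ℕ, n ≤ m → ‖ζ m - ζ n‖ ^ 2 ≤ ‖ζ m‖ ^ 2 - ‖ζ n‖ ^ 2 := by
    intro m n hnm
    set u := ζ m - ζ n with hu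
    have htle : t m ≤ t n := by
      apply div_le_div_of_nonneg_left (by norm_num) (by positivity)
      exact_mod_cast Nat.add_le_add_right hnm 1
    have heq : adjoint A (A u) + t m • u = (t n - t m) • ζ n := by
      have h1 := hζ m
      have h2 := hζ n
      rw [hu, map_sub, map_sub, sub_smul]
      have hsm : t m • (ζ m - ζ n) = t m • ζ m - t m • ζ n := smul_sub _ _ _
      rw [hsm]
      linear_combination (norm := module) h1 - h2
    have h1 : (t n - t m) * ⟪ζ n, u⟫ = ‖A u‖ ^ 2 + t m * ‖u‖ ^ 2 := by
      have := congrArg (fun x => ⟪x, u⟫) heq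
      rw [inner_add_left, real_inner_smul_left, real_inner_smul_left,
        adjoint_inner_left, real_inner_self_eq_norm_sq, real_inner_self_eq_norm_sq] at this
      linarith [this.symm]
    have hpos : 0 ≤ ⟪ζ n, u⟫ := by
      rcases eq_or_lt_of_le htle with hEq | hlt
      · have h0 : ‖A u‖ ^ 2 + t m * ‖u‖ ^ 2 = 0 := by rw [← h1, hEq]; ring
        have hu0 : ‖u‖ ^ 2 = 0 := by
          nlinarith [sq_nonneg ‖A u‖, (htpos m).le, mul_nonneg (htpos m).le (sq_nonneg ‖u‖),
            htpos m]
        have : u = 0 := by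
          have := (pow_eq_zero_iff (two_ne_zero)).mp hu0
          simpa using this
        simp [this]
      · have hc : 0 < t n - t m := by linarith
        have : 0 ≤ (t n - t m) * ⟪ζ n, u⟫ := by
          rw [h1]; positivity
        exact nonneg_of_mul_nonneg_right this hc
    have e : ζ m = ζ n + u := by rw [hu]; abel
    have n2 : ‖ζ m‖ ^ 2 = ‖ζ n‖ ^ 2 + 2 * ⟪ζ n, u⟫ + ‖u‖ ^ 2 := by
      rw [e]; exact norm_add_sq_real _ _
    nlinarith
  -- the norms-squared sequence converges, hence ζ is Cauchy
  set a : ℕ → ℝ := fun n => ‖ζ n‖ ^ 2 with ha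
  have hamono : Monotone a := by
    intro n m hnm
    have := hmono m n hnm
    simp only [ha]
    nlinarith [sq_nonneg ‖ζ m - ζ n‖]
  have habdd : BddAbove (Set.range a) := by
    refine ⟨R ^ 2, ?_⟩
    rintro x ⟨n, rfl⟩
    simp only [ha]
    have := hnorm n
    nlinarith [norm_nonneg (ζ n)]
  have haconv : CauchySeq a :=
    (tendsto_atTop_ciSup hamono habdd).cauchySeq
  have hζcauchy : CauchySeq ζ := by
    rw [Metric.cauchySeq_iff']
    intro ε hε
    obtain ⟨N, hN⟩ := Metric.cauchySeq_iff'.mp haconv (ε ^ 2) (by positivity)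
    refine ⟨N, fun n hn => ?_⟩
    have h1 : ‖ζ n - ζ N‖ ^ 2 ≤ a n - a N := hmono n N hn
    have h2 : |a n - a N| < ε ^ 2 := by
      have := hN n hn
      rwa [Real.dist_eq] at this
    have h3 : ‖ζ n - ζ N‖ ^ 2 < ε ^ 2 := lt_of_le_of_lt h1 (lt_of_le_of_lt (le_abs_self _) h2)
    rw [dist_eq_norm]
    exact lt_of_pow_lt_pow_left₀ 2 hε.le h3
  obtain ⟨zlim, hlim⟩ := cauchySeq_tendsto_of_complete hζcauchy
  refine ⟨zlim, ?_, ?_⟩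
  · exact le_of_tendsto hlim.norm (Filter.Eventually.of_forall hnorm)
  · have hAlim : Filter.Tendsto (fun n => A (ζ n)) Filter.atTop (nhds (A zlim)) :=
      ((A.continuous.tendsto zlim).comp hlim)
    have hAv : Filter.Tendsto (fun n => A (ζ n)) Filter.atTop (nhds v) := by
      rw [tendsto_iff_dist_tendsto_zero]
      have hle : ∀ n, dist (A (ζ n)) v ≤ Real.sqrt (t n * R ^ 2) := by
        intro n
        rw [dist_eq_norm]
        have := hres n
        nlinarith [Real.sq_sqrt (mul_nonneg (htpos n).le (sq_nonneg R)),
          Real.sqrt_nonneg (t n * R ^ 2), norm_nonneg (A (ζ n) - v),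
          sq_nonneg (‖A (ζ n) - v‖ - Real.sqrt (t n * R ^ 2))]
      have hg : Filter.Tendsto (fun n : ℕ => t n * R ^ 2) Filter.atTop (nhds 0) := by
        have := tendsto_one_div_add_atTop_nhds_zero_nat.mul_const (R ^ 2)
        simpa [htdef] using this
      have hg' : Filter.Tendsto (fun n : ℕ => Real.sqrt (t n * R ^ 2)) Filter.atTop (nhds 0) := by
        have := (Real.continuous_sqrt.tendsto 0).comp hg
        simpa [Function.comp_def] using this
      exact squeeze_zero (fun n => dist_nonneg) hle hg'
    exact tendsto_nhds_unique hAlim hAv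


end StabilizationAux

set_option maxHeartbeats 1000000 in
theorem stmt19 {X Y : Type*}
    [NormedAddCommGroup X] [InnerProductSpace ℝ X] [CompleteSpace X]
    [NormedAddCommGroup Y] [InnerProductSpace ℝ Y] [CompleteSpace Y]
    (S : Y →L[ℝ] Y) (A : X →L[ℝ] Y) (C ε : ℝ) (hC : 0 ≤ C) (hε : 0 ≤ ε) :
    (∀ z₀ : Y, ∃ ζ : X, ‖S z₀ + A ζ‖ ≤ ε * ‖z₀‖ ∧ ‖ζ‖ ≤ C * ‖z₀‖) ↔
      ∀ w : Y, ‖(adjoint S) w‖ ≤ C * ‖(adjoint A) w‖ + ε * ‖w‖ := by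
  constructor
  · intro h1 w
    obtain ⟨ζ, hball, hcost⟩ := h1 (adjoint S w)
    rcases eq_or_lt_of_le (norm_nonneg (adjoint S w)) with h0 | h0
    · rw [← h0]; positivity
    · have key : ‖adjoint S w‖ ^ 2
          ≤ (C * ‖adjoint A w‖ + ε * ‖w‖) * ‖adjoint S w‖ := by
      -- ⟪S* w, S* w⟫ = ⟪w, S (S* w)⟫ = ⟪w, S(S*w) + Aζ⟫ - ⟪A* w, ζ⟫
        have e1 : ‖adjoint S w‖ ^ 2 = ⟪w, S (adjoint S w)⟫ := by
          rw [← adjoint_inner_left S, real_inner_self_eq_norm_sq]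
        have e3 : ⟪w, S (adjoint S w)⟫
            = ⟪w, S (adjoint S w) + A ζ⟫ - ⟪adjoint A w, ζ⟫ := by
          rw [inner_add_right, adjoint_inner_left]; ring
        have c1 : ⟪w, S (adjoint S w) + A ζ⟫ ≤ ‖w‖ * (ε * ‖adjoint S w‖) := by
          calc ⟪w, S (adjoint S w) + A ζ⟫ ≤ ‖w‖ * ‖S (adjoint S w) + A ζ‖ :=
                real_inner_le_norm _ _
            _ ≤ ‖w‖ * (ε * ‖adjoint S w‖) :=
                mul_le_mul_of_nonneg_left hball (norm_nonneg w)
        have c2 : -⟪adjoint A w, ζ⟫ ≤ ‖adjoint A w‖ * (C * ‖adjoint S w‖) := by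
          calc -⟪adjoint A w, ζ⟫ = ⟪adjoint A w, -ζ⟫ := by rw [inner_neg_right]
            _ ≤ ‖adjoint A w‖ * ‖-ζ‖ := real_inner_le_norm _ _
            _ = ‖adjoint A w‖ * ‖ζ‖ := by rw [norm_neg]
            _ ≤ ‖adjoint A w‖ * (C * ‖adjoint S w‖) :=
                mul_le_mul_of_nonneg_left hcost (norm_nonneg _)
        rw [e1, e3]
        nlinarith
      nlinarith [key, h0]
  · intro hobs z₀
    have hR : 0 ≤ C * ‖z₀‖ := mul_nonneg hC (norm_nonneg _)
    set R := C * ‖z₀‖ with hRdef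
    set y : Y := -(S z₀) with hy
    set K : Set Y := closure (A '' Metric.closedBall (0 : X) R) with hKdef
    have hKne : K.Nonempty := ⟨A 0, subset_closure ⟨0, by simpa using hR, rfl⟩⟩
    have hKconv : Convex ℝ K :=
      ((convex_closedBall (0 : X) R).linear_image (A : X →ₗ[ℝ] Y)).closure
    have hKcomp : IsComplete K := isClosed_closure.isComplete
    obtain ⟨v, hvK, hvmin⟩ := exists_norm_eq_iInf_of_complete_convex hKne hKcomp hKconv y
    have hvar : ∀ u ∈ K, ⟪y - v, u - v⟫ ≤ 0 :=
      (norm_eq_iInf_iff_real_inner_le_zero hKconv hvK).mp hvmin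
    set w : Y := y - v with hw
    have hball : ∀ ζ : X, ‖ζ‖ ≤ R → ⟪w, A ζ⟫ ≤ ⟪w, v⟫ := by
      intro ζ hζ
      have hmem : A ζ ∈ K := subset_closure ⟨ζ, by simpa using hζ, rfl⟩
      have h := hvar (A ζ) hmem
      rw [inner_sub_right] at h
      linarith
    have hRw : R * ‖adjoint A w‖ ≤ ⟪w, v⟫ := by
      rcases eq_or_ne (adjoint A w) 0 with h0 | h0
      · rw [h0, norm_zero, mul_zero]
        have h := hball 0 (by simpa using hR)
        simpa using h
      · have hAn : 0 < ‖adjoint A w‖ := norm_pos_iff.mpr h0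
        set ζ : X := (R / ‖adjoint A w‖) • adjoint A w with hζdef
        have hζn : ‖ζ‖ = R := by
          rw [hζdef, norm_smul, Real.norm_eq_abs,
            abs_of_nonneg (div_nonneg hR hAn.le)]
          field_simp
        have h := hball ζ hζn.le
        have hcomp : ⟪w, A ζ⟫ = R * ‖adjoint A w‖ := by
          rw [hζdef, map_smul, real_inner_smul_right, ← adjoint_inner_left,
            real_inner_self_eq_norm_sq]
          field_simp
        rwa [hcomp] at h
    have hinnery : ⟪w, y⟫ = ⟪w, v⟫ + ‖w‖ ^ 2 := by
      have h : ⟪w, y⟫ = ⟪w, v⟫ + ⟪w, y - v⟫ := by rw [inner_sub_right]; ring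
      rw [h, ← hw, real_inner_self_eq_norm_sq]
    have hupper : ⟪w, y⟫ ≤ R * ‖adjoint A w‖ + ε * ‖z₀‖ * ‖w‖ := by
      have hy' : y = S (-z₀) := by rw [hy, map_neg]
      have ha1 : ⟪w, y⟫ = ⟪adjoint S w, -z₀⟫ := by
        rw [hy']; exact (adjoint_inner_left S (-z₀) w).symm
      have ha2 : ⟪adjoint S w, -z₀⟫ ≤ ‖adjoint S w‖ * ‖z₀‖ := by
        calc ⟪adjoint S w, -z₀⟫ ≤ ‖adjoint S w‖ * ‖-z₀‖ := real_inner_le_norm _ _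
          _ = ‖adjoint S w‖ * ‖z₀‖ := by rw [norm_neg]
      have ha3 : ‖adjoint S w‖ * ‖z₀‖
          ≤ (C * ‖adjoint A w‖ + ε * ‖w‖) * ‖z₀‖ :=
        mul_le_mul_of_nonneg_right (hobs w) (norm_nonneg _)
      calc ⟪w, y⟫ ≤ (C * ‖adjoint A w‖ + ε * ‖w‖) * ‖z₀‖ := by
            rw [ha1]; linarith
        _ = R * ‖adjoint A w‖ + ε * ‖z₀‖ * ‖w‖ := by rw [hRdef]; ring
    have hd2 : ‖w‖ ^ 2 ≤ ε * ‖z₀‖ * ‖w‖ := by linarith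
    have hdle : ‖w‖ ≤ ε * ‖z₀‖ := by
      rcases eq_or_lt_of_le (norm_nonneg w) with h0 | h0
      · rw [← h0]; positivity
      · nlinarith
    obtain ⟨ζ, hζR, hζv⟩ := mem_image_closedBall_of_mem_closure A hR hvK
    refine ⟨ζ, ?_, hζR⟩
    have hrw : S z₀ + A ζ = -(y - v) := by rw [hζv, hy]; abel
    rw [hrw, norm_neg]
    exact hdle
end
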